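/- Let x and z be nonzero vectors in a finite-dimensional real inner product space, let V be a subspace, and let t ∈ (0, 1] be such that ‖P_V x‖ < t·‖x‖ (where P_V is the orthogonal projection onto V) and |⟨x, z⟩| ≥ t·‖x‖·‖z‖. Then z ∉ V, and the orthogonal projection residual of x strictly decreases when z is adjoined to V: the distance from x to the subspace V + span{z} is strictly smaller than the distance from x to V. -/

import Mathlib

open RealInnerProductSpace

lemma src_infDist_eq_norm_sub_proj
    {E : Type*} [NormedAddCommGroup E] [InnerProductSpace ℝ E]
    [FiniteDimensional ℝ E] (x : E) (V : Submodule ℝ E) :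
    Metric.infDist x ↑V = ‖x - (V.orthogonalProjection x : E)‖ := by
  apply le_antisymm
  · simpa [dist_eq_norm] using
      Metric.infDist_le_dist_of_mem (V.orthogonalProjection x).2
  · rw [Metric.infDist_eq_iInf]
    have : Nonempty (↥V) := ⟨0⟩
    refine le_ciInf fun y => ?_
    rw [← Submodule.starProjection_apply, Submodule.starProjection_minimal]
    simpa [dist_eq_norm] using
      ciInf_le ⟨0, fun a ⟨b, hb⟩ => hb ▸ norm_nonneg _⟩ y

/-- if the principal angle of x with the subspace V is large
(small projection) while x is highly correlated with z, then z is not in V and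
adjoining z to V strictly decreases the projection residual of x. -/
theorem src_adjoin_decreases_residual
    {E : Type*} [NormedAddCommGroup E] [InnerProductSpace ℝ E]
    [FiniteDimensional ℝ E]
    (x z : E) (hx : x ≠ 0) (hz : z ≠ 0) (V : Submodule ℝ E)
    (t : ℝ) (ht0 : 0 < t) (ht1 : t ≤ 1)
    (hproj : ‖(V.orthogonalProjection x : E)‖ < t * ‖x‖)
    (hcorr : t * ‖x‖ * ‖z‖ ≤ |⟪x, z⟫|) :
    z ∉ V ∧
      Metric.infDist x ↑(V ⊔ Submodule.span ℝ {z}) < Metric.infDist x ↑V := by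
  set p : E := (V.orthogonalProjection x : E) with hp
  set r : E := x - p with hr
  have hzpos : (0:ℝ) < ‖z‖ := norm_pos_iff.mpr hz
  have hrV : r ∈ Vᗮ := by
    have := V.sub_starProjection_mem_orthogonal x
    rw [Submodule.starProjection_apply] at this
    exact this
  -- key: ⟪r, z⟫ ≠ 0
  have hrz : ⟪r, z⟫ ≠ 0 := by
    intro h0
    have hx_split : ⟪x, z⟫ = ⟪p, z⟫ + ⟪r, z⟫ := by
      rw [← inner_add_left]; congr 1; simp [hr]
    have h1 : |⟪x, z⟫| ≤ ‖p‖ * ‖z‖ := by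
      rw [hx_split, h0, add_zero]; exact abs_real_inner_le_norm p z
    have h2 : ‖p‖ * ‖z‖ < t * ‖x‖ * ‖z‖ :=
      mul_lt_mul_of_pos_right hproj hzpos
    linarith
  have hzV : z ∉ V := by
    intro hzv
    exact hrz ((real_inner_comm z r) ▸ hrV z hzv)
  refine ⟨hzV, ?_⟩
  -- the improved point
  set c : ℝ := ⟪r, z⟫ / ‖z‖ ^ 2 with hc
  have hwmem : p + c • z ∈ V ⊔ Submodule.span ℝ {z} :=
    Submodule.add_mem_sup (V.orthogonalProjection x).2
      (Submodule.smul_mem _ c (Submodule.mem_span_singleton_self z))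
  have hle : Metric.infDist x ↑(V ⊔ Submodule.span ℝ {z}) ≤ ‖r - c • z‖ := by
    have := Metric.infDist_le_dist_of_mem (x := x) hwmem
    rwa [dist_eq_norm, show x - (p + c • z) = r - c • z by rw [hr]; abel] at this
  have hlt : ‖r - c • z‖ < ‖r‖ := by
    have hsq : ‖r - c • z‖ ^ 2 = ‖r‖ ^ 2 - ⟪r, z⟫ ^ 2 / ‖z‖ ^ 2 := by
      rw [norm_sub_sq_real, real_inner_smul_right, norm_smul, mul_pow]
      have hz2 : (‖z‖:ℝ) ^ 2 ≠ 0 := pow_ne_zero 2 (ne_of_gt hzpos)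
      rw [Real.norm_eq_abs, sq_abs, hc]
      field_simp
      ring
    have hpos : 0 < ⟪r, z⟫ ^ 2 / ‖z‖ ^ 2 :=
      div_pos (by positivity) (pow_pos hzpos 2)
    nlinarith [norm_nonneg (r - c • z), norm_nonneg r]
  calc Metric.infDist x ↑(V ⊔ Submodule.span ℝ {z}) ≤ ‖r - c • z‖ := hle
    _ < ‖r‖ := hlt
    _ = Metric.infDist x ↑V := (src_infDist_eq_norm_sub_proj x V).symm
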